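/- Let L be a Lie algebra over a commutative ring K, a, b, c ∈ L, and f a polynomial over K. Define x = evaluation of f at (ad a)^2 applied to b, and y = evaluation of f at (ad a)^2 applied to c. Then there exist z, z₁, z₂ ∈ L such that ⁅x, c⁆ + ⁅y, b⁆ = ⁅z, a⁆, ⁅x, b⁆ = ⁅z₁, a⁆, and ⁅y, c⁆ = ⁅z₂, a⁆. -/
import Mathlib

theorem poly_pair_satisfies_system {K L : Type*} [CommRing K] [LieRing L] [LieAlgebra K L]
    (a b c : L) (f : Polynomial K) :
    let x := f.sum fun i α => α • (fun w : L => ⁅w, a⁆)^[2 * i] b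
    let y := f.sum fun i α => α • (fun w : L => ⁅w, a⁆)^[2 * i] c
    ∃ z z₁ z₂ : L, ⁅x, c⁆ + ⁅y, b⁆ = ⁅z, a⁆ ∧ ⁅x, b⁆ = ⁅z₁, a⁆ ∧ ⁅y, c⁆ = ⁅z₂, a⁆ := by
  intro x y
  set D : L → L := fun w : L => ⁅w, a⁆ with hDdef
  let Dl : L →ₗ[K] L :=
    { toFun := D
      map_add' := fun u v => add_lie u v a
      map_smul' := fun k u => smul_lie k u a }
  set R : Submodule K L := LinearMap.range Dl with hR
  -- basic step: moving one D across the bracket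
  have hstep : ∀ u v : L, ⁅D u, v⁆ + ⁅u, D v⁆ ∈ R := by
    intro u v
    refine ⟨⁅u, v⁆, ?_⟩
    show ⁅⁅u, v⁆, a⁆ = ⁅⁅u, a⁆, v⁆ + ⁅u, ⁅v, a⁆⁆
    rw [lie_lie, ← lie_skew (x := ⁅u, a⁆) (y := v)]
    abel
  have hshift : ∀ (n : ℕ) (u v : L),
      ⁅D^[n] u, v⁆ - ((-1 : ℤ)^n) • ⁅u, D^[n] v⁆ ∈ R := by
    intro n
    induction n with
    | zero => intro u v; simp
    | succ n ih =>
      intro u v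
      have h1 := ih (D u) v
      have h2 := hstep u (D^[n] v)
      have h3 := R.add_mem h1 (R.toAddSubgroup.zsmul_mem h2 ((-1 : ℤ)^n))
      have key : ⁅D^[n+1] u, v⁆ - ((-1 : ℤ)^(n+1)) • ⁅u, D^[n+1] v⁆ =
          (⁅D^[n] (D u), v⁆ - ((-1 : ℤ)^n) • ⁅D u, D^[n] v⁆) +
            ((-1 : ℤ)^n) • (⁅D u, D^[n] v⁆ + ⁅u, D (D^[n] v)⁆) := by
        rw [Function.iterate_succ_apply, Function.iterate_succ_apply', pow_succ]
        module
      rw [key]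
      exact h3
  -- even shift without signs
  have heven : ∀ (i : ℕ) (u v : L), ⁅D^[2*i] u, v⁆ + ⁅D^[2*i] v, u⁆ ∈ R := by
    intro i u v
    have h := hshift (2*i) u v
    have hsgn : ((-1 : ℤ)^(2*i)) = 1 := by
      rw [pow_mul]; norm_num
    rw [hsgn, one_smul, ← lie_skew (x := u) (y := D^[2*i] v), sub_neg_eq_add] at h
    exact h
  -- self terms
  have hself : ∀ (i : ℕ) (u : L), ⁅D^[2*i] u, u⁆ ∈ R := by
    intro i u
    have h := hshift i (D^[i] u) u
    rw [← Function.iterate_add_apply, lie_self, smul_zero, sub_zero] at h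
    rw [two_mul]
    exact h
  -- bracket with a fixed element is linear
  have hsum_lie : ∀ (w : L) (g : ℕ → K → L), ⁅f.sum g, w⁆ = f.sum fun i α => ⁅g i α, w⁆ := by
    intro w g
    let B : L →ₗ[K] L :=
      { toFun := fun u => ⁅u, w⁆
        map_add' := fun u v => add_lie u v w
        map_smul' := fun k u => smul_lie k u w }
    exact map_sum B (fun i => g i (f.coeff i)) f.support
  have hx : ⁅x, c⁆ + ⁅y, b⁆ ∈ R := by
    rw [hsum_lie, hsum_lie]
    unfold Polynomial.sum
    rw [← Finset.sum_add_distrib]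
    refine Submodule.sum_mem R fun i _ => ?_
    have : ⁅f.coeff i • D^[2*i] b, c⁆ + ⁅f.coeff i • D^[2*i] c, b⁆ =
        f.coeff i • (⁅D^[2*i] b, c⁆ + ⁅D^[2*i] c, b⁆) := by
      rw [smul_lie, smul_lie, smul_add]
    rw [this]
    exact R.smul_mem _ (heven i b c)
  have hxb : ⁅x, b⁆ ∈ R := by
    rw [hsum_lie]
    unfold Polynomial.sum
    refine Submodule.sum_mem R fun i _ => ?_
    dsimp only
    rw [smul_lie]
    exact R.smul_mem _ (hself i b)
  have hyc : ⁅y, c⁆ ∈ R := by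
    rw [hsum_lie]
    unfold Polynomial.sum
    refine Submodule.sum_mem R fun i _ => ?_
    dsimp only
    rw [smul_lie]
    exact R.smul_mem _ (hself i c)
  obtain ⟨z, hz⟩ := hx
  obtain ⟨z₁, hz₁⟩ := hxb
  obtain ⟨z₂, hz₂⟩ := hyc
  exact ⟨z, z₁, z₂, hz.symm, hz₁.symm, hz₂.symm⟩
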